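/- Let F : Tⁿ → Tⁿ be a continuous, order-preserving, additively homogeneous self-map (n ≥ 1). If the problem 𝒫(F) is feasible, then inf{‖u‖_∞ : u ∈ ℝⁿ and 𝒫(u + F) is infeasible} = |c̄w̄(F)|; if 𝒫(F) is infeasible, then inf{‖u‖_∞ : u ∈ ℝⁿ and 𝒫(u + F) is feasible} = |c̄w̄(F)|. Here the infima are taken in [0, +∞] (the infimum of the empty set being +∞). In other words, the condition number cond(F), defined as the inverse of the minimal sup-norm of an additive perturbation changing the feasibility status of 𝒫(F), equals |c̄w̄(F)|⁻¹. -/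

import Mathlib

open scoped ENNReal

noncomputable section

/-- The order topology on `T = ℝ ∪ {-∞}`. -/
instance : TopologicalSpace (WithBot ℝ) := Preorder.topology _

variable {n : ℕ}

/-- The canonical embedding of `ℝⁿ` into `Tⁿ`. -/
def toT (x : Fin n → ℝ) : Fin n → WithBot ℝ := fun i => (x i : WithBot ℝ)

/-- `F` is order-preserving. -/
def OrdPres (F : (Fin n → WithBot ℝ) → (Fin n → WithBot ℝ)) : Prop :=
  ∀ x y, x ≤ y → F x ≤ F y

/-- `F` is additively homogeneous. -/
def AddHomog (F : (Fin n → WithBot ℝ) → (Fin n → WithBot ℝ)) : Prop :=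
  ∀ (c : ℝ) (x : Fin n → WithBot ℝ),
    F (fun i => (c : WithBot ℝ) + x i) = fun i => (c : WithBot ℝ) + F x i

/-- The additive perturbation `u + F` of `F` by a real vector `u`. -/
def pert (u : Fin n → ℝ) (F : (Fin n → WithBot ℝ) → (Fin n → WithBot ℝ)) :
    (Fin n → WithBot ℝ) → (Fin n → WithBot ℝ) :=
  fun x i => (u i : WithBot ℝ) + F x i

/-- Feasibility of the problem `𝒫(F)`: there is `x ∈ Tⁿ` with `x ≠ 𝟘` and `x ≤ F(x)`. -/
def FeasT (F : (Fin n → WithBot ℝ) → (Fin n → WithBot ℝ)) : Prop :=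
  ∃ x : Fin n → WithBot ℝ, x ≠ (fun _ => ⊥) ∧ x ≤ F x

/-- The upper Collatz–Wielandt number of `F`, as an extended real
(`sInf ∅ = ⊤ = +∞` in `EReal`). -/
def ucw (F : (Fin n → WithBot ℝ) → (Fin n → WithBot ℝ)) : EReal :=
  sInf ((fun μ : ℝ => (μ : EReal)) ''
    {μ : ℝ | ∃ z : Fin n → ℝ, ∀ i, F (toT z) i ≤ ((μ + z i : ℝ) : WithBot ℝ)})

/- ------------------------------------------------------------------- -/
/- Auxiliary material                                                   -/
/- ------------------------------------------------------------------- -/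

instance : OrderTopology (WithBot ℝ) := ⟨rfl⟩

namespace CondAux

open Filter Set

/-- The Collatz–Wielandt set of `F`. -/
def CW (F : (Fin n → WithBot ℝ) → (Fin n → WithBot ℝ)) : Set ℝ :=
  {μ : ℝ | ∃ z : Fin n → ℝ, ∀ i, F (toT z) i ≤ ((μ + z i : ℝ) : WithBot ℝ)}

lemma ucw_eq (F : (Fin n → WithBot ℝ) → (Fin n → WithBot ℝ)) :
    ucw F = sInf ((fun μ : ℝ => (μ : EReal)) '' CW F) := rfl

/-- cancellation helper -/
lemma addc_cancel (c : ℝ) (y : WithBot ℝ) :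
    ((-c : ℝ) : WithBot ℝ) + ((c : WithBot ℝ) + y) = y := by
  cases y with
  | bot => simp
  | coe r => rw [← WithBot.coe_add, ← WithBot.coe_add]; norm_num

lemma addc_le_iff (c : ℝ) (a b : WithBot ℝ) :
    (c : WithBot ℝ) + a ≤ (c : WithBot ℝ) + b ↔ a ≤ b := by
  constructor
  · intro h
    have h2 := add_le_add_right h ((-c : ℝ) : WithBot ℝ)
    rwa [addc_cancel, addc_cancel] at h2
  · intro h; exact add_le_add_right h _

/-- adding a real constant is continuous on `WithBot ℝ`. -/
lemma continuous_addc (c : ℝ) :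
    Continuous (fun y : WithBot ℝ => (c : WithBot ℝ) + y) := by
  let e : WithBot ℝ ≃o WithBot ℝ :=
    { toFun := fun y => (c : WithBot ℝ) + y
      invFun := fun y => ((-c : ℝ) : WithBot ℝ) + y
      left_inv := fun y => addc_cancel c y
      right_inv := fun y => by
        have := addc_cancel (-c) y
        rwa [neg_neg] at this
      map_rel_iff' := by intro a b; exact addc_le_iff c a b }
  exact e.continuous

lemma pert_ordPres (F : (Fin n → WithBot ℝ) → (Fin n → WithBot ℝ))
    (hmono : OrdPres F) (u : Fin n → ℝ) : OrdPres (pert u F) :=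
  fun x y h i => add_le_add_right (hmono x y h i) _

lemma pert_addHomog (F : (Fin n → WithBot ℝ) → (Fin n → WithBot ℝ))
    (hhom : AddHomog F) (u : Fin n → ℝ) : AddHomog (pert u F) := by
  intro c x
  funext i
  simp only [pert, hhom c x]
  exact add_left_comm _ _ _

lemma pert_continuous (F : (Fin n → WithBot ℝ) → (Fin n → WithBot ℝ))
    (hcont : Continuous F) (u : Fin n → ℝ) : Continuous (pert u F) :=
  continuous_pi fun i => (continuous_addc (u i)).comp ((continuous_apply i).comp hcont)

/-- Lemma A: if `F` is feasible then every element of the CW set is nonnegative. -/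
lemma lemA (F : (Fin n → WithBot ℝ) → (Fin n → WithBot ℝ))
    (hmono : OrdPres F) (hhom : AddHomog F) (hfeas : FeasT F)
    {μ : ℝ} (hμ : μ ∈ CW F) : 0 ≤ μ := by
  obtain ⟨x, hx0, hxF⟩ := hfeas
  obtain ⟨z, hz⟩ := hμ
  have hne : ∃ j, x j ≠ ⊥ := by
    by_contra h
    push_neg at h
    exact hx0 (funext fun i => h i)
  obtain ⟨j, hj⟩ := hne
  set f : Fin n → WithBot ℝ := fun i => x i + ((-(z i) : ℝ) : WithBot ℝ) with hf
  have hFn : (Finset.univ : Finset (Fin n)).Nonempty := ⟨j, Finset.mem_univ j⟩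
  obtain ⟨i0, -, hi0⟩ := Finset.exists_mem_eq_sup Finset.univ hFn f
  have hLbot : Finset.univ.sup f ≠ ⊥ := by
    intro hL
    have h1 : f j ≤ ⊥ := hL ▸ Finset.le_sup (Finset.mem_univ j)
    cases hxj : x j with
    | bot => exact hj hxj
    | coe r =>
      have : f j = ((r + -(z j) : ℝ) : WithBot ℝ) := by
        rw [hf]; simp only [hxj, WithBot.coe_add]
      rw [this] at h1
      exact WithBot.coe_ne_bot (le_bot_iff.1 h1)
  obtain ⟨lam, hlam⟩ : ∃ lam : ℝ, Finset.univ.sup f = (lam : WithBot ℝ) := by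
    cases hL : Finset.univ.sup f with
    | bot => exact absurd hL hLbot
    | coe r => exact ⟨r, rfl⟩
  have hxle : ∀ i, x i ≤ (lam : WithBot ℝ) + ((z i : ℝ) : WithBot ℝ) := by
    intro i
    have h1 : f i ≤ (lam : WithBot ℝ) := hlam ▸ Finset.le_sup (Finset.mem_univ i)
    have h2 := add_le_add_left h1 ((z i : ℝ) : WithBot ℝ)
    calc x i = x i + ((-(z i) : ℝ) : WithBot ℝ) + ((z i : ℝ) : WithBot ℝ) := by
              rw [add_assoc, ← WithBot.coe_add]; norm_num
      _ ≤ (lam : WithBot ℝ) + ((z i : ℝ) : WithBot ℝ) := h2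
  have hchain : ∀ i, x i ≤ (lam : WithBot ℝ) + F (toT z) i := by
    intro i
    have h2 := hmono _ _ (fun i => hxle i)
    have h3 := (hxF i).trans (h2 i)
    have h4 := congrFun (hhom lam (toT z)) i
    rw [← h4]
    exact h3
  have hfi0 : f i0 = (lam : WithBot ℝ) := by rw [← hi0, hlam]
  have h3 : x i0 ≤ ((lam + μ + z i0 : ℝ) : WithBot ℝ) := by
    refine (hchain i0).trans ?_
    have h4 := add_le_add_right (hz i0) ((lam : ℝ) : WithBot ℝ)
    calc (lam : WithBot ℝ) + F (toT z) i0
        ≤ (lam : WithBot ℝ) + ((μ + z i0 : ℝ) : WithBot ℝ) := h4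
      _ = ((lam + μ + z i0 : ℝ) : WithBot ℝ) := by
          rw [← WithBot.coe_add]; congr 1; ring
  have h5 : (lam : WithBot ℝ) ≤ ((lam + μ : ℝ) : WithBot ℝ) := by
    have h6 := add_le_add_left h3 ((-(z i0) : ℝ) : WithBot ℝ)
    have h7 : x i0 + ((-(z i0) : ℝ) : WithBot ℝ) = (lam : WithBot ℝ) := hfi0 ▸ rfl
    rw [h7] at h6
    calc (lam : WithBot ℝ)
        ≤ ((lam + μ + z i0 : ℝ) : WithBot ℝ) + ((-(z i0) : ℝ) : WithBot ℝ) := h6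
      _ = ((lam + μ : ℝ) : WithBot ℝ) := by rw [← WithBot.coe_add]; congr 1; ring
  have : lam ≤ lam + μ := by exact_mod_cast h5
  linarith

/-- shifting CW elements into the perturbed map. -/
lemma shift_mem (F : (Fin n → WithBot ℝ) → (Fin n → WithBot ℝ))
    {μ : ℝ} (hμ : μ ∈ CW F) (u : Fin n → ℝ) {c : ℝ} (hc : ∀ i, u i ≤ c) :
    μ + c ∈ CW (pert u F) := by
  obtain ⟨z, hz⟩ := hμ
  refine ⟨z, fun i => ?_⟩
  calc pert u F (toT z) i = ((u i : ℝ) : WithBot ℝ) + F (toT z) i := rfl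
    _ ≤ (c : WithBot ℝ) + ((μ + z i : ℝ) : WithBot ℝ) :=
        add_le_add (by exact_mod_cast hc i) (hz i)
    _ = ((μ + c + z i : ℝ) : WithBot ℝ) := by rw [← WithBot.coe_add]; congr 1; ring

/-- shifting CW elements out of the perturbed map. -/
lemma shift_mem' (F : (Fin n → WithBot ℝ) → (Fin n → WithBot ℝ))
    (u : Fin n → ℝ) {μ c : ℝ} (hμ : μ ∈ CW (pert u F)) (hc : ∀ i, -u i ≤ c) :
    μ + c ∈ CW F := by
  obtain ⟨z, hz⟩ := hμ
  refine ⟨z, fun i => ?_⟩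
  have h0 : F (toT z) i = ((-u i : ℝ) : WithBot ℝ) + pert u F (toT z) i := by
    show F (toT z) i = ((-u i : ℝ) : WithBot ℝ) + (((u i : ℝ) : WithBot ℝ) + F (toT z) i)
    rw [addc_cancel]
  rw [h0]
  calc ((-u i : ℝ) : WithBot ℝ) + pert u F (toT z) i
      ≤ (c : WithBot ℝ) + ((μ + z i : ℝ) : WithBot ℝ) :=
        add_le_add (by exact_mod_cast hc i) (hz i)
    _ = ((μ + c + z i : ℝ) : WithBot ℝ) := by rw [← WithBot.coe_add]; congr 1; ring

end CondAux
namespace CondAux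

open Filter Set

variable {n : ℕ}

/-- one step of the capped decreasing iteration. -/
def step (G : (Fin n → WithBot ℝ) → (Fin n → WithBot ℝ)) (v : Fin n → ℝ) : Fin n → ℝ :=
  fun i => min (v i) (WithBot.unbotD 0 (G (toT v) i ⊔ ((v i - 1 : ℝ) : WithBot ℝ)))

lemma coe_step (G : (Fin n → WithBot ℝ) → (Fin n → WithBot ℝ)) (v : Fin n → ℝ) (i : Fin n) :
    ((step G v i : ℝ) : WithBot ℝ)
      = min ((v i : ℝ) : WithBot ℝ) (G (toT v) i ⊔ ((v i - 1 : ℝ) : WithBot ℝ)) := by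
  cases hsup : G (toT v) i ⊔ ((v i - 1 : ℝ) : WithBot ℝ) with
  | bot =>
      exfalso
      have h1 : ((v i - 1 : ℝ) : WithBot ℝ) ≤ ⊥ := hsup ▸ le_sup_right
      exact WithBot.coe_ne_bot (le_bot_iff.1 h1)
  | coe r =>
      show ((min (v i) (WithBot.unbotD 0 (G (toT v) i ⊔ ((v i - 1 : ℝ) : WithBot ℝ))) : ℝ) : WithBot ℝ) = _
      rw [hsup, WithBot.unbotD_coe, WithBot.coe_min]

lemma step_le (G : (Fin n → WithBot ℝ) → (Fin n → WithBot ℝ)) (v : Fin n → ℝ) (i : Fin n) :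
    step G v i ≤ v i := min_le_left _ _

lemma step_stay (G : (Fin n → WithBot ℝ) → (Fin n → WithBot ℝ)) {v : Fin n → ℝ} {i : Fin n}
    (h : ¬ G (toT v) i ≤ ((v i : ℝ) : WithBot ℝ)) : step G v i = v i := by
  have h' : ((v i : ℝ) : WithBot ℝ) < G (toT v) i := not_le.1 h
  have h2 : ((step G v i : ℝ) : WithBot ℝ) = ((v i : ℝ) : WithBot ℝ) := by
    rw [coe_step]
    exact min_eq_left (le_trans h'.le le_sup_left)
  exact_mod_cast h2

lemma step_drop (G : (Fin n → WithBot ℝ) → (Fin n → WithBot ℝ)) {v : Fin n → ℝ} {i : Fin n}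
    (h : G (toT v) i ≤ ((v i : ℝ) : WithBot ℝ)) :
    G (toT v) i ≤ ((step G v i : ℝ) : WithBot ℝ) := by
  rw [coe_step]
  exact le_min h le_sup_left

lemma step_ub (G : (Fin n → WithBot ℝ) → (Fin n → WithBot ℝ)) (v : Fin n → ℝ) (i : Fin n) :
    ((step G v i : ℝ) : WithBot ℝ) ≤ G (toT v) i ⊔ ((v i - 1 : ℝ) : WithBot ℝ) := by
  rw [coe_step]; exact min_le_right _ _

open scoped Classical in
/-- the limit of an antitone real sequence, in `WithBot ℝ`. -/
def limPt (a : ℕ → ℝ) : WithBot ℝ :=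
  if BddBelow (Set.range a) then (((⨅ k, a k : ℝ)) : WithBot ℝ) else ⊥

lemma limPt_of_bdd {a : ℕ → ℝ} (h : BddBelow (Set.range a)) :
    limPt a = (((⨅ k, a k : ℝ)) : WithBot ℝ) := by rw [limPt, if_pos h]

lemma limPt_of_unbdd {a : ℕ → ℝ} (h : ¬ BddBelow (Set.range a)) :
    limPt a = ⊥ := by rw [limPt, if_neg h]

lemma tendsto_limPt (a : ℕ → ℝ) (ha : Antitone a) :
    Tendsto (fun k => ((a k : ℝ) : WithBot ℝ)) atTop (nhds (limPt a)) := by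
  by_cases h : BddBelow (Set.range a)
  case pos =>
    rw [limPt_of_bdd h]
    refine tendsto_order.2 ⟨?_, ?_⟩
    · intro b hb
      refine Filter.Eventually.of_forall (fun k => lt_of_lt_of_le hb ?_)
      exact_mod_cast ciInf_le h k
    · intro b hb
      cases b with
      | bot => exact absurd hb (by simp)
      | coe r =>
        have h1 : (⨅ k, a k) < r := by exact_mod_cast hb
        obtain ⟨k0, hk0⟩ := exists_lt_of_ciInf_lt h1
        filter_upwards [Filter.eventually_ge_atTop k0] with k hk
        exact_mod_cast lt_of_le_of_lt (ha hk) hk0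
  case neg =>
    rw [limPt_of_unbdd h]
    refine tendsto_order.2 ⟨?_, ?_⟩
    · intro b hb; exact absurd hb not_lt_bot
    · intro b hb
      cases b with
      | bot => exact absurd hb (lt_irrefl ⊥)
      | coe r =>
        obtain ⟨y, ⟨k0, rfl⟩, hy⟩ := not_bddBelow_iff.1 h r
        filter_upwards [Filter.eventually_ge_atTop k0] with k hk
        exact_mod_cast lt_of_le_of_lt (ha hk) hy

/-- Lemma B': if no real vector satisfies `G z ≤ z`, then `𝒫(G)` is feasible. -/
lemma lemB (G : (Fin n → WithBot ℝ) → (Fin n → WithBot ℝ)) (hcont : Continuous G)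
    (hmono : OrdPres G)
    (h0 : ∀ z : Fin n → ℝ, ¬ ∀ i, G (toT z) i ≤ ((z i : ℝ) : WithBot ℝ)) :
    FeasT G := by
  set u : ℕ → Fin n → ℝ := fun k => (step G)^[k] (fun _ => 0) with hu
  have hsucc : ∀ k, u (k + 1) = step G (u k) := by
    intro k
    rw [hu]
    exact Function.iterate_succ_apply' (step G) k _
  have hdec : ∀ k i, u (k + 1) i ≤ u k i := by
    intro k i; rw [hsucc]; exact step_le G (u k) i
  have hanti : ∀ i, Antitone (fun k => u k i) :=
    fun i => antitone_nat_of_succ_le (fun k => hdec k i)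
  have hantiv : ∀ (k m : ℕ), k ≤ m → toT (u m) ≤ toT (u k) := by
    intro k m hkm i
    simp only [toT]
    exact_mod_cast hanti i hkm
  -- persistence of the drop property
  have hCmono : ∀ k i, G (toT (u k)) i ≤ ((u k i : ℝ) : WithBot ℝ) →
      G (toT (u (k + 1))) i ≤ ((u (k + 1) i : ℝ) : WithBot ℝ) := by
    intro k i h
    have h1 := hmono _ _ (hantiv k (k + 1) (Nat.le_succ k)) i
    refine h1.trans ?_
    rw [hsucc]
    exact step_drop G h
  have hCpersist : ∀ i k m, k ≤ m → G (toT (u k)) i ≤ ((u k i : ℝ) : WithBot ℝ) →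
      G (toT (u m)) i ≤ ((u m i : ℝ) : WithBot ℝ) := by
    intro i k m hkm h
    induction m, hkm using Nat.le_induction with
    | base => exact h
    | succ m hm ih => exact hCmono m i ih
  -- a coordinate that never drops
  obtain ⟨i0, hi0⟩ : ∃ i0 : Fin n, ∀ k, ¬ G (toT (u k)) i0 ≤ ((u k i0 : ℝ) : WithBot ℝ) := by
    by_contra h
    push_neg at h
    choose f hf using h
    set K := Finset.univ.sup f with hK
    have hall : ∀ i, G (toT (u K)) i ≤ ((u K i : ℝ) : WithBot ℝ) := by
      intro i
      exact hCpersist i (f i) K (Finset.le_sup (Finset.mem_univ i)) (hf i)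
    exact h0 (u K) (fun i => hall i)
  have hzero : ∀ k, u k i0 = 0 := by
    intro k
    induction k with
    | zero => rfl
    | succ k ih =>
        rw [hsucc, step_stay G (hi0 k), ih]
  -- the limit point
  set x : Fin n → WithBot ℝ := fun i => limPt (fun k => u k i) with hx
  have hT : Tendsto (fun k => toT (u k)) atTop (nhds x) :=
    tendsto_pi_nhds.2 fun i => tendsto_limPt _ (hanti i)
  have hGT : Tendsto (fun k => G (toT (u k))) atTop (nhds (G x)) :=
    (hcont.tendsto x).comp hT
  have hGi : ∀ i, Tendsto (fun k => G (toT (u k)) i) atTop (nhds (G x i)) :=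
    fun i => tendsto_pi_nhds.1 hGT i
  have hxle : ∀ i, x i ≤ G x i := by
    intro i
    by_cases h : BddBelow (Set.range (fun k => u k i))
    · have hxi : x i = (((⨅ k, u k i : ℝ)) : WithBot ℝ) := limPt_of_bdd h
      set m : ℝ := ⨅ k, u k i with hm
      rw [hxi]
      by_contra hcon
      have hlt : G x i < (m : WithBot ℝ) := not_le.1 hcon
      obtain ⟨r, hr1, hr2, hr3⟩ : ∃ r : ℝ, G x i < (r : WithBot ℝ) ∧ m - 1 < r ∧ r < m := by
        cases hGx : G x i with
        | bot =>
            exact ⟨m - 2⁻¹, WithBot.bot_lt_coe _, by linarith, by linarith⟩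
        | coe s =>
            have hs : s < m := by rw [hGx] at hlt; exact_mod_cast hlt
            have hmax : max s (m - 1) < m := max_lt hs (by linarith)
            refine ⟨(max s (m - 1) + m) / 2, ?_, ?_, by linarith⟩
            · have : s < (max s (m - 1) + m) / 2 := by
                have h1 : s ≤ max s (m - 1) := le_max_left _ _
                linarith
              exact_mod_cast this
            · have h1 : m - 1 ≤ max s (m - 1) := le_max_right _ _
              linarith
      have hev1 : ∀ᶠ k in atTop, G (toT (u k)) i < (r : WithBot ℝ) :=
        (tendsto_order.1 (hGi i)).2 _ hr1
      obtain ⟨k0, hk0⟩ : ∃ k0, u k0 i < r + 1 :=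
        exists_lt_of_ciInf_lt (by rw [← hm]; linarith)
      obtain ⟨k, hk2, hk1⟩ := (hev1.and (Filter.eventually_ge_atTop k0)).exists
      have hub : u k i < r + 1 := lt_of_le_of_lt (hanti i hk1) hk0
      have hdropk : ((u (k + 1) i : ℝ) : WithBot ℝ)
          ≤ G (toT (u k)) i ⊔ ((u k i - 1 : ℝ) : WithBot ℝ) := by
        rw [hsucc]; exact step_ub G (u k) i
      have hlt2 : ((u (k + 1) i : ℝ) : WithBot ℝ) < (r : WithBot ℝ) :=
        lt_of_le_of_lt hdropk
          (sup_lt_iff.2 ⟨hk2, by exact_mod_cast (by linarith : u k i - 1 < r)⟩)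
      have h1 : u (k + 1) i < r := by exact_mod_cast hlt2
      have h2 : m ≤ u (k + 1) i := ciInf_le h (k + 1)
      linarith
    · have hxi : x i = ⊥ := limPt_of_unbdd h
      rw [hxi]; exact bot_le
  have hbdd : BddBelow (Set.range fun k => u k i0) := by
    refine ⟨0, fun y hy => ?_⟩
    obtain ⟨k, rfl⟩ := hy
    simpa using (hzero k).ge
  have hx0 : x i0 = ((0 : ℝ) : WithBot ℝ) := by
    have h1 : x i0 = (((⨅ k, u k i0 : ℝ)) : WithBot ℝ) := limPt_of_bdd hbdd
    rw [h1]
    norm_cast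
    simp only [hzero]
    exact ciInf_const
  refine ⟨x, ?_, fun i => hxle i⟩
  intro hcon
  have := congrFun hcon i0
  rw [hx0] at this
  exact WithBot.coe_ne_bot this

/-- Lemma B' in CW-set form. -/
lemma lemB' (G : (Fin n → WithBot ℝ) → (Fin n → WithBot ℝ)) (hcont : Continuous G)
    (hmono : OrdPres G) (h0 : (0 : ℝ) ∉ CW G) : FeasT G := by
  apply lemB G hcont hmono
  intro z hz
  exact h0 ⟨z, fun i => by simpa using hz i⟩

end CondAux
open CondAux
/-- The condition number of `𝒫(F)` equals `|c̄w̄(F)|⁻¹`: the minimal sup-norm of an additive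
perturbation changing the feasibility status of `𝒫(F)` equals `|c̄w̄(F)|` (in `[0, +∞]`). -/
theorem stmt1 (hn : 1 ≤ n) (F : (Fin n → WithBot ℝ) → (Fin n → WithBot ℝ))
    (hcont : Continuous F) (hmono : OrdPres F) (hhom : AddHomog F) :
    (FeasT F →
      sInf ((fun u : Fin n → ℝ => (‖u‖₊ : ℝ≥0∞)) '' {u | ¬ FeasT (pert u F)}) =
        (ucw F).abs) ∧
    (¬ FeasT F →
      sInf ((fun u : Fin n → ℝ => (‖u‖₊ : ℝ≥0∞)) '' {u | FeasT (pert u F)}) =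
        (ucw F).abs) := by
  classical
  have hnone : Nonempty (Fin n) := ⟨⟨0, hn⟩⟩
  have hnormbound : ∀ (u : Fin n → ℝ) (i : Fin n), u i ≤ ‖u‖ ∧ -u i ≤ ‖u‖ := by
    intro u i
    have h1 : |u i| ≤ ‖u‖ := by
      have := norm_le_pi_norm u i
      rwa [Real.norm_eq_abs] at this
    exact ⟨le_trans (le_abs_self _) h1, le_trans (neg_le_abs _) h1⟩
  have hle_ucw : ∀ {μ : ℝ}, μ ∈ CW F → ucw F ≤ (μ : EReal) := by
    intro μ hμ
    rw [ucw_eq]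
    exact sInf_le (Set.mem_image_of_mem _ hμ)
  have hlt_ucw : ∀ {r : ℝ}, ucw F < (r : EReal) → ∃ μ ∈ CW F, μ < r := by
    intro r h
    rw [ucw_eq] at h
    obtain ⟨b, hb, hblt⟩ := sInf_lt_iff.1 h
    obtain ⟨μ, hμ, rfl⟩ := hb
    refine ⟨μ, hμ, ?_⟩
    have hblt2 : (μ : EReal) < (r : EReal) := by simpa using hblt
    exact_mod_cast hblt2
  constructor
  · intro hfeas
    have hpos : ∀ μ ∈ CW F, (0:ℝ) ≤ μ := fun μ hμ => lemA F hmono hhom hfeas hμ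
    by_cases hT : ucw F = ⊤
    · have hemp : ∀ μ : ℝ, μ ∉ CW F := by
        intro μ hμ
        have h1 : ucw F ≤ (μ : EReal) := hle_ucw hμ
        rw [hT] at h1
        exact (EReal.coe_ne_top μ) (top_le_iff.1 h1)
      have hS : {u : Fin n → ℝ | ¬ FeasT (pert u F)} = ∅ := by
        ext u
        simp only [Set.mem_setOf_eq, Set.mem_empty_iff_false, iff_false, not_not]
        apply lemB' (pert u F) (pert_continuous F hcont u) (pert_ordPres F hmono u)
        intro h0
        exact hemp (0 + ‖u‖) (shift_mem' F u h0 (fun i => (hnormbound u i).2))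
      rw [hS, Set.image_empty, sInf_empty, hT, EReal.abs_top]
    · have hBne : ucw F ≠ ⊥ := by
        intro hB
        obtain ⟨μ, hμ, hlt⟩ := hlt_ucw (r := 0) (by rw [hB]; exact EReal.bot_lt_coe 0)
        linarith [hpos μ hμ]
      set c := (ucw F).toReal with hcdef
      have hc : (c : EReal) = ucw F := EReal.coe_toReal hT hBne
      have hc0 : (0:ℝ) ≤ c := by
        have h1 : ((0:ℝ) : EReal) ≤ ucw F := by
          rw [ucw_eq]
          refine le_sInf ?_
          rintro b ⟨μ, hμ, rfl⟩
          show ((0:ℝ) : EReal) ≤ (μ : EReal)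
          exact_mod_cast hpos μ hμ
        rw [← hc] at h1
        exact_mod_cast h1
      have habs : (ucw F).abs = ENNReal.ofReal c := by
        rw [← hc, EReal.abs_def, abs_of_nonneg hc0]
      rw [habs]
      apply le_antisymm
      · refine ENNReal.le_of_forall_pos_le_add (fun ε hε _ => ?_)
        have hεR : (0:ℝ) < (ε:ℝ) := by exact_mod_cast hε
        set δ : ℝ := (ε:ℝ)/2 with hδ
        obtain ⟨μ, hμA, hμlt⟩ : ∃ μ ∈ CW F, μ < c + δ := by
          apply hlt_ucw
          rw [← hc]
          exact_mod_cast (by linarith : c < c + δ)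
        have hμ0 : 0 ≤ μ := hpos μ hμA
        set a : ℝ := -(μ + δ) with ha
        have hinfeas : (fun _ : Fin n => a) ∈ {u : Fin n → ℝ | ¬ FeasT (pert u F)} := by
          intro hf
          have hmem : (μ + a : ℝ) ∈ CW (pert (fun _ : Fin n => a) F) :=
            shift_mem F hμA _ (fun i => le_refl a)
          have h2 := lemA _ (pert_ordPres F hmono _) (pert_addHomog F hhom _) hf hmem
          rw [ha] at h2; linarith
        have h3 : sInf ((fun u : Fin n → ℝ => (‖u‖₊ : ℝ≥0∞)) '' {u | ¬ FeasT (pert u F)})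
            ≤ ((‖(fun _ : Fin n => a)‖₊ : ℝ≥0∞)) :=
          sInf_le (Set.mem_image_of_mem _ hinfeas)
        refine h3.trans ?_
        have hnorm : ((‖(fun _ : Fin n => a)‖₊ : ℝ≥0∞)) = ENNReal.ofReal (μ + δ) := by
          rw [pi_nnnorm_const a, ha, nnnorm_neg]
          exact Real.enorm_eq_ofReal (by linarith)
        rw [hnorm]
        calc ENNReal.ofReal (μ + δ)
            ≤ ENNReal.ofReal (c + 2*δ) := ENNReal.ofReal_le_ofReal (by linarith)
          _ = ENNReal.ofReal c + ENNReal.ofReal (2*δ) :=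
              ENNReal.ofReal_add hc0 (by linarith)
          _ = ENNReal.ofReal c + ε := by
              congr 1
              rw [show (2*δ : ℝ) = (ε:ℝ) by rw [hδ]; ring]
              exact ENNReal.ofReal_coe_nnreal
      · refine le_sInf ?_
        rintro b ⟨u, hu, rfl⟩
        simp only [Set.mem_setOf_eq] at hu
        have hkey : c ≤ ‖u‖ := by
          by_contra hlt
          push_neg at hlt
          apply hu
          apply lemB' _ (pert_continuous F hcont u) (pert_ordPres F hmono u)
          intro h0
          have hmem : (0 + ‖u‖ : ℝ) ∈ CW F :=
            shift_mem' F u h0 (fun i => (hnormbound u i).2)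
          have h2 : ucw F ≤ ((0 + ‖u‖ : ℝ) : EReal) := hle_ucw hmem
          rw [← hc] at h2
          have h4 : c ≤ 0 + ‖u‖ := by exact_mod_cast h2
          linarith
        calc ENNReal.ofReal c ≤ ENNReal.ofReal ‖u‖ := ENNReal.ofReal_le_ofReal hkey
          _ = ((‖u‖₊ : ℝ≥0∞)) := ofReal_norm u
  · intro hinf
    have h0F : (0:ℝ) ∈ CW F := by
      by_contra h0
      exact hinf (lemB' F hcont hmono h0)
    have hcle : ucw F ≤ ((0:ℝ) : EReal) := hle_ucw h0F
    have hT : ucw F ≠ ⊤ := by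
      intro h; rw [h] at hcle
      exact EReal.coe_ne_top 0 (top_le_iff.1 hcle)
    by_cases hB : ucw F = ⊥
    · have hnonefeas : {u : Fin n → ℝ | FeasT (pert u F)} = ∅ := by
        ext u
        simp only [Set.mem_setOf_eq, Set.mem_empty_iff_false, iff_false]
        intro hf
        obtain ⟨μ, hμ, hlt⟩ : ∃ μ ∈ CW F, μ < -‖u‖ - 1 := by
          apply hlt_ucw; rw [hB]; exact EReal.bot_lt_coe _
        have hmem : (μ + ‖u‖ : ℝ) ∈ CW (pert u F) :=
          shift_mem F hμ u (fun i => (hnormbound u i).1)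
        have h2 := lemA _ (pert_ordPres F hmono u) (pert_addHomog F hhom u) hf hmem
        linarith
      rw [hnonefeas, Set.image_empty, sInf_empty, hB, EReal.abs_bot]
    · set c := (ucw F).toReal with hcdef
      have hc : (c : EReal) = ucw F := EReal.coe_toReal hT hB
      have hc0 : c ≤ 0 := by
        rw [← hc] at hcle; exact_mod_cast hcle
      have habs : (ucw F).abs = ENNReal.ofReal (-c) := by
        rw [← hc, EReal.abs_def, abs_of_nonpos hc0]
      rw [habs]
      apply le_antisymm
      · refine ENNReal.le_of_forall_pos_le_add (fun ε hε _ => ?_)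
        have hεR : (0:ℝ) < (ε:ℝ) := by exact_mod_cast hε
        set δ : ℝ := (ε:ℝ)/2 with hδ
        obtain ⟨μ, hμA, hμlt⟩ : ∃ μ ∈ CW F, μ < c + δ := by
          apply hlt_ucw; rw [← hc]
          exact_mod_cast (by linarith : c < c + δ)
        have hμge : c ≤ μ := by
          have h1 := hle_ucw hμA; rw [← hc] at h1; exact_mod_cast h1
        set b : ℝ := -μ + 2*δ with hb
        have hfeasb : (fun _ : Fin n => b) ∈ {u : Fin n → ℝ | FeasT (pert u F)} := by
          apply lemB' _ (pert_continuous F hcont _) (pert_ordPres F hmono _)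
          intro h0
          have hmem : (0 + (μ - 2*δ) : ℝ) ∈ CW F :=
            shift_mem' F _ h0 (fun i => le_of_eq (by rw [hb]; ring))
          have h2 : ucw F ≤ ((0 + (μ - 2*δ) : ℝ) : EReal) := hle_ucw hmem
          rw [← hc] at h2
          have h4 : c ≤ 0 + (μ - 2*δ) := by exact_mod_cast h2
          linarith
        have h3 : sInf ((fun u : Fin n → ℝ => (‖u‖₊ : ℝ≥0∞)) '' {u | FeasT (pert u F)})
            ≤ ((‖(fun _ : Fin n => b)‖₊ : ℝ≥0∞)) :=
          sInf_le (Set.mem_image_of_mem _ hfeasb)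
        refine h3.trans ?_
        have hbpos : (0:ℝ) ≤ b := by rw [hb]; linarith
        have hnormb : ((‖(fun _ : Fin n => b)‖₊ : ℝ≥0∞)) = ENNReal.ofReal b := by
          rw [pi_nnnorm_const b]
          exact Real.enorm_eq_ofReal hbpos
        rw [hnormb]
        calc ENNReal.ofReal b
            ≤ ENNReal.ofReal (-c + 2*δ) := ENNReal.ofReal_le_ofReal (by rw [hb]; linarith)
          _ = ENNReal.ofReal (-c) + ENNReal.ofReal (2*δ) :=
              ENNReal.ofReal_add (by linarith) (by linarith)
          _ = ENNReal.ofReal (-c) + ε := by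
              congr 1
              rw [show (2*δ : ℝ) = (ε:ℝ) by rw [hδ]; ring]
              exact ENNReal.ofReal_coe_nnreal
      · refine le_sInf ?_
        rintro bb ⟨u, hu, rfl⟩
        simp only [Set.mem_setOf_eq] at hu
        have hkey : -c ≤ ‖u‖ := by
          have hall : ((-‖u‖ : ℝ) : EReal) ≤ ucw F := by
            rw [ucw_eq]
            refine le_sInf ?_
            rintro bbb ⟨μ, hμ, rfl⟩
            have hmem : (μ + ‖u‖ : ℝ) ∈ CW (pert u F) :=
              shift_mem F hμ u (fun i => (hnormbound u i).1)
            have h2 := lemA _ (pert_ordPres F hmono u) (pert_addHomog F hhom u) hu hmem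
            show ((-‖u‖ : ℝ) : EReal) ≤ (μ : EReal)
            exact_mod_cast (by linarith : -‖u‖ ≤ μ)
          rw [← hc] at hall
          have h4 : -‖u‖ ≤ c := by exact_mod_cast hall
          linarith
        calc ENNReal.ofReal (-c) ≤ ENNReal.ofReal ‖u‖ := ENNReal.ofReal_le_ofReal hkey
          _ = ((‖u‖₊ : ℝ≥0∞)) := ofReal_norm u
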